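/- Let a_1, a_2, ..., a_c ≥ 1 and let h = (h_0, ..., h_s) be the coefficient sequence of ∏_{i=1}^c (1+z+...+z^{a_i-1}) (the h-vector of a complete intersection of type (a_1,...,a_c)). Then for all 0 ≤ i ≤ a_2 - 1 (assuming a_1 ≤ a_2 ≤ ... ≤ a_c): h_{s-i} = binom(c-1+i, c-1) - binom(c-1+i-a_1, c-1), with the convention that out-of-range binomial coefficients are 0. -/
import Mathlib


open Polynomial

/-- The polynomial `1 + z + ⋯ + z^(d-1)`. -/
noncomputable def geom (d : ℤ) : Polynomial ℤ :=
  ∑ i ∈ Finset.range d.toNat, Polynomial.X ^ i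

/-- Binomial coefficient with integer top argument, vanishing when the top argument is
negative or smaller than the bottom one. -/
def ch (a : ℤ) (b : ℕ) : ℤ := if a < 0 then 0 else (a.toNat).choose b

open Finset in
private noncomputable def gN (d : ℕ) : Polynomial ℤ :=
  ∑ i ∈ Finset.range d, Polynomial.X ^ i

lemma coeff_gN (d n : ℕ) : (gN d).coeff n = if n < d then 1 else 0 := by
  simp only [gN, finset_sum_coeff, coeff_X_pow]
  rw [Finset.sum_ite_eq (Finset.range d) n (fun _ => (1 : ℤ))]
  simp [Finset.mem_range]

lemma gN_ne_zero {d : ℕ} (hd : 0 < d) : gN d ≠ 0 := by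
  intro h
  have := coeff_gN d 0
  rw [h] at this
  simp [hd] at this

lemma natDegree_gN {d : ℕ} (hd : 0 < d) : (gN d).natDegree = d - 1 := by
  apply le_antisymm
  · apply natDegree_sum_le_of_forall_le
    intro i hi
    simpa using Nat.le_sub_one_of_lt (Finset.mem_range.mp hi)
  · apply le_natDegree_of_ne_zero
    rw [coeff_gN]
    simp [Nat.sub_lt hd]

lemma reverse_gN (d : ℕ) : (gN d).reverse = gN d := by
  rcases Nat.eq_zero_or_pos d with h | h
  · subst h; simp [gN]
  ext n
  rw [coeff_reverse, natDegree_gN h, coeff_gN]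
  rcases le_or_gt n (d - 1) with hn | hn
  · rw [revAt_le hn, coeff_gN, if_pos (by omega), if_pos (by omega)]
  · rw [revAt_eq_self_of_lt hn, coeff_gN, if_neg (by omega)]

lemma hockey (c t : ℕ) : ∀ n, (∑ j ∈ Finset.range n, (t + j).choose c) + t.choose (c + 1) = (t + n).choose (c + 1) := by
  intro n
  induction n with
  | zero => simp
  | succ n ih =>
    rw [Finset.sum_range_succ, add_right_comm, ih,
      show t + (n + 1) = (t + n) + 1 from rfl, Nat.choose_succ_succ']
    omega

lemma coeff_prod_gN : ∀ (m : ℕ) (d : Fin (m + 1) → ℕ) (n : ℕ), (∀ j, n < d j) →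
    (∏ j, gN (d j)).coeff n = ((m + n).choose m : ℤ) := by
  intro m
  induction m with
  | zero =>
    intro d n h
    rw [Fin.prod_univ_one, coeff_gN, if_pos (h 0)]
    simp
  | succ m ih =>
    intro d n h
    rw [Fin.prod_univ_succ, coeff_mul, Finset.Nat.sum_antidiagonal_eq_sum_range_succ_mk]
    have step : ∀ k ∈ Finset.range (n + 1),
        (gN (d 0)).coeff k * (∏ j : Fin (m + 1), gN (d j.succ)).coeff (n - k)
          = (((m + (n - k)).choose m : ℕ) : ℤ) := by
      intro k hk
      rw [coeff_gN, if_pos (lt_of_le_of_lt (Nat.lt_succ_iff.mp (Finset.mem_range.mp hk)) (h 0)),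
        one_mul, ih (fun j => d j.succ) (n - k) (fun j => lt_of_le_of_lt (Nat.sub_le n k) (h j.succ))]
    rw [Finset.sum_congr rfl step]
    have hrefl : ∑ k ∈ Finset.range (n + 1), (((m + (n - k)).choose m : ℕ) : ℤ)
        = ∑ j ∈ Finset.range (n + 1), (((m + j).choose m : ℕ) : ℤ) := by
      rw [← Finset.sum_range_reflect (fun j => (((m + j).choose m : ℕ) : ℤ)) (n + 1)]
      apply Finset.sum_congr rfl
      intro k hk
      have : n - k = n + 1 - 1 - k := by omega
      rw [this]
    rw [hrefl, ← Nat.cast_sum]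
    have := hockey m m (n + 1)
    rw [Nat.choose_succ_self, add_zero] at this
    rw [show m + 1 + n = m + (n + 1) by omega, ← this]


lemma reverse_prod {α : Type*} (s : Finset α) (f : α → Polynomial ℤ) :
    (∏ j ∈ s, f j).reverse = ∏ j ∈ s, (f j).reverse := by
  induction s using Finset.cons_induction with
  | empty =>
    simp only [Finset.prod_empty]
    rw [show (1 : Polynomial ℤ) = C 1 by simp, reverse_C]
  | cons a s ha ih => rw [Finset.prod_cons, Finset.prod_cons, reverse_mul_of_domain, ih]

lemma main_nat (c : ℕ) (b : Fin (c + 2) → ℕ) (hb1 : ∀ j, 1 ≤ b j)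
    (hbm : ∀ j k : Fin (c + 2), j ≤ k → b j ≤ b k) (i : ℕ) (hi : i < b 1) :
    (∏ j, gN (b j)).coeff ((∏ j, gN (b j)).natDegree - i) =
      (((c + 1 + i).choose (c + 1) : ℕ) : ℤ) - (((c + 1 + i - b 0).choose (c + 1) : ℕ) : ℤ) := by
  set P := ∏ j, gN (b j) with hP
  have hdeg : P.natDegree = ∑ j, (b j - 1) := by
    rw [hP, Polynomial.natDegree_prod _ _ (fun j _ => gN_ne_zero (hb1 j))]
    exact Finset.sum_congr rfl fun j _ => natDegree_gN (hb1 j)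
  have hiN : i ≤ P.natDegree := by
    rw [hdeg]
    calc i ≤ b 1 - 1 := by omega
    _ ≤ ∑ j, (b j - 1) :=
      Finset.single_le_sum (f := fun j => b j - 1) (fun j _ => Nat.zero_le _) (Finset.mem_univ 1)
  have hrev : P.reverse = P := by
    rw [hP, reverse_prod]
    exact Finset.prod_congr rfl fun j _ => reverse_gN (b j)
  rw [← revAt_le hiN, ← coeff_reverse, hrev]
  have h1succ : ∀ j : Fin (c + 1), (1 : Fin (c + 2)) ≤ j.succ := by
    intro j
    rw [Fin.le_def, Fin.val_one, Fin.val_succ]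
    omega
  rcases lt_or_ge i (b 0) with hcase | hcase
  · -- i < b 0 ≤ b j for all j
    have hall : ∀ j, i < b j := fun j => lt_of_lt_of_le hcase (hbm 0 j (Fin.zero_le j))
    rw [hP, coeff_prod_gN (c + 1) b i hall]
    have : (c + 1 + i - b 0).choose (c + 1) = 0 :=
      Nat.choose_eq_zero_of_lt (by omega)
    rw [this]
    simp
  · -- b 0 ≤ i
    rw [hP, Fin.prod_univ_succ, coeff_mul, Finset.Nat.sum_antidiagonal_eq_sum_range_succ_mk]
    have hQ : ∀ k ∈ Finset.range (i + 1),
        (gN (b 0)).coeff k * (∏ j : Fin (c + 1), gN (b j.succ)).coeff (i - k)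
          = (if k < b 0 then (1 : ℤ) else 0) * (((c + (i - k)).choose c : ℕ) : ℤ) := by
      intro k hk
      rw [coeff_gN, coeff_prod_gN c (fun j => b j.succ) (i - k)
        (fun j => by show i - k < b j.succ; have := hbm 1 j.succ (h1succ j); omega)]
    rw [Finset.sum_congr rfl hQ]
    have hsub : ∑ k ∈ Finset.range (i + 1),
        (if k < b 0 then (1 : ℤ) else 0) * (((c + (i - k)).choose c : ℕ) : ℤ)
          = ∑ k ∈ Finset.range (b 0), (((c + (i - k)).choose c : ℕ) : ℤ) := by
      rw [← Finset.sum_subset (Finset.range_subset_range.mpr (by omega : b 0 ≤ i + 1))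
        (fun x hx hx' => by
          rw [if_neg (by simpa using hx'), zero_mul])]
      exact Finset.sum_congr rfl fun k hk => by
        rw [if_pos (Finset.mem_range.mp hk), one_mul]
    rw [hsub]
    have hnat : (∑ k ∈ Finset.range (b 0), (c + (i - k)).choose c)
        + (c + 1 + i - b 0).choose (c + 1) = (c + 1 + i).choose (c + 1) := by
      have hr : ∑ k ∈ Finset.range (b 0), (c + (i - k)).choose c
          = ∑ j ∈ Finset.range (b 0), ((c + i - b 0 + 1) + j).choose c := by
        rw [← Finset.sum_range_reflect (fun j => ((c + i - b 0 + 1) + j).choose c) (b 0)]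
        apply Finset.sum_congr rfl
        intro k hk
        have := Finset.mem_range.mp hk
        congr 1
        omega
      rw [hr]
      have h := hockey c (c + i - b 0 + 1) (b 0)
      rw [show c + 1 + i - b 0 = c + i - b 0 + 1 by omega,
        show c + 1 + i = c + i - b 0 + 1 + b 0 by omega]
      exact h
    rw [← Nat.cast_sum]
    omega

/-- Last entries of the h-vector of a complete intersection of type `(a_1,…,a_{c+2})` with
`1 ≤ a_1 ≤ ⋯ ≤ a_{c+2}`: for `0 ≤ i ≤ a_2 - 1`, the coefficient of `z^{s-i}` in
`∏ (1 + z + ⋯ + z^{a_j - 1})` equals `binom(c+1+i, c+1) - binom(c+1+i-a_1, c+1)`. -/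
theorem ci_last_entries (c : ℕ) (a : Fin (c + 2) → ℤ) (ha : ∀ j, 1 ≤ a j)
    (hmono : Monotone a) (i : ℕ) (hi : (i : ℤ) ≤ a 1 - 1) :
    (∏ j, geom (a j)).coeff ((∏ j, geom (a j)).natDegree - i) =
      ch ((c : ℤ) + 1 + i) (c + 1) - ch ((c : ℤ) + 1 + i - a 0) (c + 1) := by
  have hb1 : ∀ j, 1 ≤ (a j).toNat := fun j => by have := ha j; omega
  have hbm : ∀ j k : Fin (c + 2), j ≤ k → (a j).toNat ≤ (a k).toNat := fun j k h => by
    have := hmono h; omega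
  have hi' : i < (a 1).toNat := by have := ha 1; omega
  have main := main_nat c (fun j => (a j).toNat) hb1 hbm i hi'
  have e : ∀ j, geom (a j) = gN ((a j).toNat) := fun _ => rfl
  simp only [e]
  rw [main]
  have ha0 := ha 0
  have h1 : ch ((c : ℤ) + 1 + i) (c + 1) = (((c + 1 + i).choose (c + 1) : ℕ) : ℤ) := by
    unfold ch
    rw [if_neg (by omega), show ((c : ℤ) + 1 + i).toNat = c + 1 + i by omega]
  have h2 : ch ((c : ℤ) + 1 + i - a 0) (c + 1)
      = (((c + 1 + i - (a 0).toNat).choose (c + 1) : ℕ) : ℤ) := by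
    unfold ch
    split_ifs with h
    · rw [show c + 1 + i - (a 0).toNat = 0 by omega, Nat.choose_eq_zero_of_lt (by omega)]
      simp
    · rw [show ((c : ℤ) + 1 + i - a 0).toNat = c + 1 + i - (a 0).toNat by omega]
  rw [h1, h2]
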